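/- arXiv:2503.13877 — 3 statements merged into one kernel-verified Lean document; each statement's English description precedes it below -/
import Mathlib

section
/- Let a, Δt, Δx be real numbers with Δx > 0 and Δt > 0, and set ν = a·Δt/Δx. Suppose |ν| ≤ 1 (the CFL condition). If u : ℤ → ℝ is such that the family ((u i)²)_{i ∈ ℤ} is summable, then for the Lax–Friedrichs update u' : ℤ → ℝ defined by u' i = (1/2)·(u (i-1) + u (i+1)) − (ν/2)·(u (i+1) − u (i-1)), the family ((u' i)²)_{i ∈ ℤ} is summable and ∑_{i ∈ ℤ} (u' i)² ≤ ∑_{i ∈ ℤ} (u i)² (L² stability). -/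
/-- L² stability of the Lax–Friedrichs scheme for linear advection under the CFL condition. -/
theorem laxFriedrichs_L2_stability
    (a Δt Δx : ℝ) (hΔx : 0 < Δx) (hΔt : 0 < Δt)
    (ν : ℝ) (hν : ν = a * Δt / Δx) (hcfl : |ν| ≤ 1)
    (u : ℤ → ℝ) (hsum : Summable (fun i : ℤ => (u i)^2))
    (u' : ℤ → ℝ)
    (hupd : ∀ i : ℤ, u' i =
      (1/2) * (u (i-1) + u (i+1)) - (ν/2) * (u (i+1) - u (i-1))) :
    Summable (fun i : ℤ => (u' i)^2) ∧
      (∑' i : ℤ, (u' i)^2) ≤ (∑' i : ℤ, (u i)^2) := by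
  obtain ⟨hν1, hν2⟩ := abs_le.1 hcfl
  set α := (1 + ν) / 2 with hα
  set β := (1 - ν) / 2 with hβ
  have hα0 : 0 ≤ α := by rw [hα]; linarith
  have hβ0 : 0 ≤ β := by rw [hβ]; linarith
  have hαβ : α + β = 1 := by rw [hα, hβ]; ring
  have hsum1 : Summable (fun i : ℤ => (u (i - 1))^2) := by
    have := ((Equiv.subRight (1 : ℤ)).summable_iff (f := fun i : ℤ => (u i)^2)).2 hsum
    simpa [Function.comp_def, Equiv.subRight] using this
  have hsum2 : Summable (fun i : ℤ => (u (i + 1))^2) := by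
    have := ((Equiv.addRight (1 : ℤ)).summable_iff (f := fun i : ℤ => (u i)^2)).2 hsum
    simpa [Function.comp_def, Equiv.addRight] using this
  have hbd : ∀ i : ℤ, (u' i)^2 ≤ α * (u (i - 1))^2 + β * (u (i + 1))^2 := by
    intro i
    have h : u' i = α * u (i - 1) + β * u (i + 1) := by
      rw [hupd i, hα, hβ]; ring
    rw [h]
    nlinarith [mul_nonneg (mul_nonneg hα0 hβ0) (sq_nonneg (u (i - 1) - u (i + 1))), hαβ, sq_nonneg (u (i - 1) - u (i + 1))]
  have hg : Summable (fun i : ℤ => α * (u (i - 1))^2 + β * (u (i + 1))^2) :=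
    (hsum1.mul_left α).add (hsum2.mul_left β)
  have hs' : Summable (fun i : ℤ => (u' i)^2) :=
    Summable.of_nonneg_of_le (fun i => sq_nonneg _) hbd hg
  refine ⟨hs', ?_⟩
  have t1 : (∑' i : ℤ, (u (i - 1))^2) = ∑' i : ℤ, (u i)^2 := by
    have := (Equiv.subRight (1 : ℤ)).tsum_eq (f := fun i : ℤ => (u i)^2)
    simpa [Equiv.subRight] using this
  have t2 : (∑' i : ℤ, (u (i + 1))^2) = ∑' i : ℤ, (u i)^2 := by
    have := (Equiv.addRight (1 : ℤ)).tsum_eq (f := fun i : ℤ => (u i)^2)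
    simpa [Equiv.addRight] using this
  calc (∑' i : ℤ, (u' i)^2)
      ≤ ∑' i : ℤ, (α * (u (i - 1))^2 + β * (u (i + 1))^2) :=
        Summable.tsum_le_tsum hbd hs' hg
    _ = α * (∑' i : ℤ, (u (i - 1))^2) + β * (∑' i : ℤ, (u (i + 1))^2) := by
        rw [Summable.tsum_add (hsum1.mul_left α) (hsum2.mul_left β), tsum_mul_left, tsum_mul_left]
    _ = (α + β) * ∑' i : ℤ, (u i)^2 := by rw [t1, t2]; ring
    _ = ∑' i : ℤ, (u i)^2 := by rw [hαβ, one_mul]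
end

section
/- Let a, Δt, Δx be real numbers with Δx > 0 and Δt > 0, and set ν = a·Δt/Δx. Suppose |ν| ≤ 1 (the CFL condition). If u : ℤ → ℝ is such that the family (|u (i+1) − u i|)_{i ∈ ℤ} is summable, then for the Lax–Friedrichs update u' : ℤ → ℝ defined by u' i = (1/2)·(u (i-1) + u (i+1)) − (ν/2)·(u (i+1) − u (i-1)), the family (|u' (i+1) − u' i|)_{i ∈ ℤ} is summable and TV(u') = ∑_{i ∈ ℤ} |u' (i+1) − u' i| ≤ ∑_{i ∈ ℤ} |u (i+1) − u i| = TV(u) (the scheme is total variation diminishing). -/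
set_option maxHeartbeats 1000000


/-- The Lax–Friedrichs scheme for linear advection is total variation diminishing
under the CFL condition. -/
theorem laxFriedrichs_TVD
    (a Δt Δx : ℝ) (hΔx : 0 < Δx) (hΔt : 0 < Δt)
    (ν : ℝ) (hν : ν = a * Δt / Δx) (hcfl : |ν| ≤ 1)
    (u : ℤ → ℝ) (hsum : Summable (fun i : ℤ => |u (i+1) - u i|))
    (u' : ℤ → ℝ)
    (hupd : ∀ i : ℤ, u' i =
      (1/2) * (u (i-1) + u (i+1)) - (ν/2) * (u (i+1) - u (i-1))) :
    Summable (fun i : ℤ => |u' (i+1) - u' i|) ∧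
      (∑' i : ℤ, |u' (i+1) - u' i|) ≤ (∑' i : ℤ, |u (i+1) - u i|) := by
  set d : ℤ → ℝ := fun i => |u (i+1) - u i| with hd
  obtain ⟨hν1, hν2⟩ := abs_le.mp hcfl
  have hc1 : 0 ≤ (1 + ν) / 2 := by linarith
  have hc2 : 0 ≤ (1 - ν) / 2 := by linarith
  -- shifted summables
  have hs1 : Summable (fun i : ℤ => d (i - 1)) :=
    (Equiv.subRight (1 : ℤ)).summable_iff.mpr hsum
  have hs2 : Summable (fun i : ℤ => d (i + 1)) :=
    (Equiv.addRight (1 : ℤ)).summable_iff.mpr hsum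
  have ht1 : (∑' i : ℤ, d (i - 1)) = ∑' i, d i :=
    (Equiv.subRight (1 : ℤ)).tsum_eq d
  have ht2 : (∑' i : ℤ, d (i + 1)) = ∑' i, d i :=
    (Equiv.addRight (1 : ℤ)).tsum_eq d
  set g : ℤ → ℝ := fun i => (1 + ν) / 2 * d (i - 1) + (1 - ν) / 2 * d (i + 1) with hg
  have hgs : Summable g := (hs1.mul_left _).add (hs2.mul_left _)
  have hkey : ∀ i : ℤ, |u' (i + 1) - u' i| ≤ g i := by
    intro i
    have h1 := hupd i
    have h2 := hupd (i + 1)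
    have e1 : i + 1 - 1 = i := by ring
    have e2 : i + 1 + 1 = i + 2 := by ring
    rw [e1, e2] at h2
    have hdiff : u' (i + 1) - u' i =
        (1 + ν) / 2 * (u (i - 1 + 1) - u (i - 1)) + (1 - ν) / 2 * (u (i + 1 + 1) - u (i + 1)) := by
      rw [h1, h2]
      have e3 : i - 1 + 1 = i := by ring
      have e4 : i + 1 + 1 = i + 2 := by ring
      rw [e3, e4]; ring
    calc |u' (i + 1) - u' i|
        ≤ |(1 + ν) / 2 * (u (i - 1 + 1) - u (i - 1))| + |(1 - ν) / 2 * (u (i + 1 + 1) - u (i + 1))| := by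
          rw [hdiff]; exact abs_add_le _ _
      _ = g i := by
          rw [abs_mul, abs_mul, abs_of_nonneg hc1, abs_of_nonneg hc2]
  have hnonneg : ∀ i : ℤ, 0 ≤ |u' (i + 1) - u' i| := fun i => abs_nonneg _
  have hsum' : Summable (fun i : ℤ => |u' (i + 1) - u' i|) :=
    Summable.of_nonneg_of_le hnonneg hkey hgs
  refine ⟨hsum', ?_⟩
  calc (∑' i : ℤ, |u' (i + 1) - u' i|) ≤ ∑' i, g i := Summable.tsum_le_tsum hkey hsum' hgs
    _ = (1 + ν) / 2 * (∑' i : ℤ, d (i - 1)) + (1 - ν) / 2 * (∑' i : ℤ, d (i + 1)) := by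
        rw [Summable.tsum_add (hs1.mul_left _) (hs2.mul_left _), tsum_mul_left, tsum_mul_left]
    _ = ∑' i, d i := by rw [ht1, ht2]; ring
end

section
/- Let u_L, u_R, v_th be real numbers, and let A = !![0, 1; v_th² − (u_L² + u_R²)/2, u_L + u_R] be the arithmetic-average Roe matrix for the (ρ, ρu) components of the isothermal Euler equations expressed in terms of the left and right velocities u_L, u_R. Then A has a real eigenvalue (i.e. there exists λ ∈ ℝ with det(A − λ·1) = 0) if and only if (u_R − u_L)² ≤ 4·v_th²; in that case its eigenvalues are (u_L + u_R)/2 ± √(v_th² − (u_R − u_L)²/4). In particular, the Roe solver's hyperbolicity-preservation for the isothermal Euler system cannot be guaranteed unconditionally, but holds under the condition |u_R − u_L| ≤ 2·v_th. -/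
open Matrix Real

lemma detcalc (uL uR v_th lam : ℝ) :
    det ((!![0, 1; v_th ^ 2 - (uL ^ 2 + uR ^ 2) / 2, uL + uR] :
        Matrix (Fin 2) (Fin 2) ℝ) - lam • 1)
      = lam ^ 2 - (uL + uR) * lam - v_th ^ 2 + (uL ^ 2 + uR ^ 2) / 2 := by
  simp [Matrix.det_fin_two, Matrix.sub_apply, Matrix.smul_apply, Matrix.one_apply]
  ring

/-- The arithmetic-average Roe matrix for the (ρ, ρu) components of the isothermal
Euler equations has a real eigenvalue iff (u_R − u_L)² ≤ 4·v_th²; in that case its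
eigenvalues are (u_L + u_R)/2 ± √(v_th² − (u_R − u_L)²/4). -/
theorem isothermalEuler_roe_hyperbolicity (uL uR v_th : ℝ) :
    ((∃ lam : ℝ,
        det ((!![0, 1; v_th ^ 2 - (uL ^ 2 + uR ^ 2) / 2, uL + uR] :
            Matrix (Fin 2) (Fin 2) ℝ) - lam • 1) = 0) ↔
      (uR - uL) ^ 2 ≤ 4 * v_th ^ 2) ∧
    ((uR - uL) ^ 2 ≤ 4 * v_th ^ 2 →
      det ((!![0, 1; v_th ^ 2 - (uL ^ 2 + uR ^ 2) / 2, uL + uR] :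
          Matrix (Fin 2) (Fin 2) ℝ) -
        ((uL + uR) / 2 + Real.sqrt (v_th ^ 2 - (uR - uL) ^ 2 / 4)) • 1) = 0 ∧
      det ((!![0, 1; v_th ^ 2 - (uL ^ 2 + uR ^ 2) / 2, uL + uR] :
          Matrix (Fin 2) (Fin 2) ℝ) -
        ((uL + uR) / 2 - Real.sqrt (v_th ^ 2 - (uR - uL) ^ 2 / 4)) • 1) = 0) := by
  constructor
  · constructor
    · rintro ⟨lam, h⟩
      rw [detcalc] at h
      nlinarith [sq_nonneg (2 * lam - (uL + uR))]
    · intro h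
      refine ⟨(uL + uR) / 2 + Real.sqrt (v_th ^ 2 - (uR - uL) ^ 2 / 4), ?_⟩
      rw [detcalc]
      have hnn : (0:ℝ) ≤ v_th ^ 2 - (uR - uL) ^ 2 / 4 := by linarith
      have := Real.sq_sqrt hnn
      nlinarith [this]
  · intro h
    have hnn : (0:ℝ) ≤ v_th ^ 2 - (uR - uL) ^ 2 / 4 := by linarith
    have hs := Real.sq_sqrt hnn
    constructor <;> rw [detcalc] <;> nlinarith [hs]
end
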